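/- Let π ≠ id be a permutation and let k be a positive integer with k ≥ d₂(π). Suppose σ = π t_{αβ} for some α ≤ k < β with ℓ(σ) = ℓ(π) + 1. Then d₁(σ) ≥ d₁(π). -/

import Mathlib

/-- A permutation of the positive integers, modeled as a permutation of `ℕ`
fixing `0` (and, separately assumed, all but finitely many points). -/
def FinPerm (w : Equiv.Perm ℕ) : Prop :=
  w 0 = 0 ∧ {i : ℕ | w i ≠ i}.Finite

/-- The length `ℓ(w)`: the number of inversions, i.e. pairs `i < j` with `w i > w j`. -/
noncomputable def len (w : Equiv.Perm ℕ) : ℕ :=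
  {p : ℕ × ℕ | p.1 < p.2 ∧ w p.2 < w p.1}.ncard

/-- The set of descents: positions `i ≥ 1` with `w i > w (i+1)`. -/
def descents (w : Equiv.Perm ℕ) : Set ℕ :=
  {i : ℕ | 0 < i ∧ w (i + 1) < w i}

/-- `d₁(w)`: the first (smallest) descent of `w`. -/
noncomputable def d1 (w : Equiv.Perm ℕ) : ℕ := sInf (descents w)

/-- `d₂(w)`: the last (largest) descent of `w`. -/
noncomputable def d2 (w : Equiv.Perm ℕ) : ℕ := sSup (descents w)

/-- `kCover k ρ π` means `ρ ⋖_k π`:  `π = ρ t_{a b}` for some positive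
`a ≤ k < b`, with `ℓ(π) = ℓ(ρ) + 1`. -/
def kCover (k : ℕ) (ρ π : Equiv.Perm ℕ) : Prop :=
  ∃ a b : ℕ, 0 < a ∧ a ≤ k ∧ k < b ∧ π = ρ * Equiv.swap a b ∧ len π = len ρ + 1


lemma inv_finite (w : Equiv.Perm ℕ) (hw : {i : ℕ | w i ≠ i}.Finite) :
    {p : ℕ × ℕ | p.1 < p.2 ∧ w p.2 < w p.1}.Finite := by
  obtain ⟨N, hN⟩ := hw.bddAbove
  have hfix : ∀ m, N < m → w m = m := by
    intro m hm
    by_contra h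
    exact absurd (hN h) (not_le.mpr hm)
  apply Set.Finite.subset ((Set.finite_Iio (N+1)).prod (Set.finite_Iio (N+1)))
  rintro ⟨i, j⟩ ⟨hij, hinv⟩
  simp only [Set.mem_setOf_eq] at hij hinv
  have hwi : w i ≤ N := by
    by_contra h
    push_neg at h
    have h2 : w (w i) = w i := hfix _ h
    have h3 : w i = i := w.injective h2
    have h4 : w j = j := hfix _ (by omega)
    omega
  have hj : j ≤ N := by
    by_contra h
    push_neg at h
    have : w j = j := hfix _ h
    omega
  constructor <;> simp <;> omega


lemma key_inj (w : Equiv.Perm ℕ) (hw : {i : ℕ | w i ≠ i}.Finite)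
    (a b : ℕ) (hab : a < b) (hval : w a < w b) (E : Finset (ℕ × ℕ))
    (hE : ∀ p ∈ E, p.1 < p.2 ∧ (w * Equiv.swap a b) p.2 < (w * Equiv.swap a b) p.1)
    (hEinv : ∀ p ∈ E, ¬ w p.2 < w p.1)
    (hEs : ∀ p ∈ E, Equiv.swap a b p.2 < Equiv.swap a b p.1) :
    len w + E.card ≤ len (w * Equiv.swap a b) := by
  classical
  set s : Equiv.Perm ℕ := Equiv.swap a b with hs
  set σ : Equiv.Perm ℕ := w * s with hσdef
  have hsapp : ∀ x, σ x = w (s x) := fun x => rfl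
  have hss : ∀ x, s (s x) = x := fun x => Equiv.swap_apply_self a b x
  have hsa : s a = b := Equiv.swap_apply_left a b
  have hsb : s b = a := Equiv.swap_apply_right a b
  have hsx : ∀ x, x ≠ a → x ≠ b → s x = x := fun x h1 h2 => Equiv.swap_apply_of_ne_of_ne h1 h2
  set I : Set (ℕ × ℕ) := {p | p.1 < p.2 ∧ w p.2 < w p.1} with hI
  set T : Set (ℕ × ℕ) := {p | p.1 < p.2 ∧ σ p.2 < σ p.1} with hT
  have hIfin : I.Finite := inv_finite w hw
  have hTfin : T.Finite := by
    apply inv_finite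
    apply Set.Finite.subset (hw.union (Set.toFinite ({a, b} : Set ℕ)))
    intro x hx
    by_cases hxa : x = a
    · exact Or.inr (by simp [hxa])
    by_cases hxb : x = b
    · exact Or.inr (by simp [hxb])
    · left
      simp only [Set.mem_setOf_eq] at hx ⊢
      rwa [hsapp, hsx x hxa hxb] at hx
  set C : ℕ × ℕ → Prop := fun p => p ∈ E ∨ (p.1 = a ∧ p.2 < b) ∨ (p.2 = b ∧ a < p.1) with hC
  set f : ℕ × ℕ → ℕ × ℕ := fun p => if C p then p else (s p.1, s p.2) with hf
  set S : Set (ℕ × ℕ) := I ∪ ↑E with hS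
  have hS12 : ∀ p ∈ S, p.1 < p.2 := by
    rintro p (hp | hp)
    · exact hp.1
    · exact (hE p hp).1
  have horder : ∀ p ∈ I, ¬ C p → s p.1 < s p.2 := by
    rintro ⟨i, j⟩ ⟨hij, hinv⟩ hc
    simp only [hC, not_or, not_and, not_lt] at hc
    obtain ⟨-, hc1, hc2⟩ := hc
    simp only at hij hinv hc1 hc2 ⊢
    by_cases hia : i = a
    · subst hia
      have hjb : j ≠ b := by
        rintro rfl; exact absurd hval (not_lt.mpr hinv.le)
      have hbj : b < j := lt_of_le_of_ne (hc1 rfl) (Ne.symm hjb)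
      rw [hsa, hsx j (by omega) hjb]
      exact hbj
    · by_cases hjb : j = b
      · subst hjb
        have hia' : i < a := lt_of_le_of_ne (hc2 rfl) hia
        rw [hsb, hsx i hia (by omega)]
        exact hia'
      · by_cases hib : i = b
        · subst hib
          rw [hsb, hsx j (by omega) (by omega)]
          omega
        · by_cases hja : j = a
          · subst hja
            rw [hsa, hsx i hia hib]
            omega
          · rw [hsx i hia hib, hsx j hja hjb]
            exact hij
  have hmap : ∀ p ∈ S, f p ∈ T := by
    intro p hp
    by_cases hc : C p
    · rw [hf]; simp only [if_pos hc]
      by_cases hpE : p ∈ E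
      · exact hE p hpE
      · have hpI : p ∈ I := by
          rcases hp with hp | hp
          · exact hp
          · exact absurd (by simpa using hp) hpE
        obtain ⟨hij, hinv⟩ := hpI
        rcases hc with hc | hc | hc
        · exact absurd hc hpE
        · obtain ⟨h1, h2⟩ := hc
          refine ⟨hij, ?_⟩
          have hp2a : p.2 ≠ a := by omega
          have hp2b : p.2 ≠ b := by omega
          rw [hsapp, hsapp, hsx _ hp2a hp2b, h1, hsa]
          calc w p.2 < w p.1 := hinv
            _ = w a := by rw [h1]
            _ < w b := hval
        · obtain ⟨h1, h2⟩ := hc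
          refine ⟨hij, ?_⟩
          have hp1a : p.1 ≠ a := by omega
          have hp1b : p.1 ≠ b := by omega
          rw [hsapp, hsapp, hsx _ hp1a hp1b, h1, hsb]
          calc w a < w b := hval
            _ = w p.2 := by rw [h1]
            _ < w p.1 := hinv
    · have hpE : p ∉ E := fun h => hc (Or.inl h)
      have hpI : p ∈ I := by
        rcases hp with hp | hp
        · exact hp
        · exact absurd (by simpa using hp) hpE
      have ho := horder p hpI hc
      obtain ⟨hij, hinv⟩ := hpI
      rw [hf]; simp only [if_neg hc]
      refine ⟨ho, ?_⟩
      rw [hsapp, hsapp]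
      simp only
      rw [hss, hss]
      exact hinv
  have hmixed : ∀ p ∈ S, ∀ q ∈ S, C p → ¬ C q → f p ≠ f q := by
    intro p hp q hq hcp hcq heq
    rw [hf] at heq
    simp only [if_pos hcp, if_neg hcq] at heq
    have hqE : q ∉ E := fun h => hcq (Or.inl h)
    have hqI : q ∈ I := by
      rcases hq with hq | hq
      · exact hq
      · exact absurd (by simpa using hq) hqE
    have hoq : s q.1 < s q.2 := horder q hqI hcq
    have h1 : p.1 = s q.1 := by rw [heq]
    have h2 : p.2 = s q.2 := by rw [heq]
    rcases hcp with hcp | hcp | hcp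
    · have hx := hEs p hcp
      rw [h1, h2] at hx
      simp only [hs] at hx
      rw [hss, hss] at hx
      exact absurd hqI.1 (not_lt.mpr hx.le)
    · obtain ⟨ha1, ha2⟩ := hcp
      have hq1b : q.1 = b := by
        have h3 : s p.1 = q.1 := by rw [h1, hss]
        rw [ha1, hsa] at h3
        exact h3.symm
      have hq12 := hqI.1
      have hq2a : q.2 ≠ a := by omega
      have hq2b : q.2 ≠ b := by omega
      rw [hsx _ hq2a hq2b] at h2
      omega
    · obtain ⟨ha1, ha2⟩ := hcp
      have hqb : q.2 = a := by
        have h3 : s p.2 = q.2 := by rw [h2, hss]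
        rw [ha1, hsb] at h3
        exact h3.symm
      have hp12 := hS12 p hp
      have hp1a : p.1 ≠ a := by omega
      have hp1b : p.1 ≠ b := by omega
      have hq1 : q.1 = p.1 := by
        have h3 : s p.1 = q.1 := by rw [h1, hss]
        rw [hsx _ hp1a hp1b] at h3
        omega
      have hq12 := hqI.1
      omega
  have hinj : Set.InjOn f S := by
    intro p hp q hq heq
    by_cases hcp : C p <;> by_cases hcq : C q
    · rw [hf] at heq
      simpa [if_pos hcp, if_pos hcq] using heq
    · exact absurd heq (hmixed p hp q hq hcp hcq)
    · exact absurd heq.symm (hmixed q hq p hp hcq hcp)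
    · rw [hf] at heq
      simp only [if_neg hcp, if_neg hcq] at heq
      have e := Prod.ext_iff.mp heq
      exact Prod.ext (s.injective e.1) (s.injective e.2)
  have hsub : S.ncard ≤ T.ncard := Set.ncard_le_ncard_of_injOn f hmap hinj hTfin
  have hdisj : Disjoint I ↑E := by
    rw [Set.disjoint_left]
    rintro p ⟨h1, h2⟩ hpE
    exact hEinv p (by simpa using hpE) h2
  have hcount : S.ncard = I.ncard + E.card := by
    rw [hS, Set.ncard_union_eq hdisj hIfin (E.finite_toSet), Set.ncard_coe_finset]
  have hlenI : len w = I.ncard := rfl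
  have hlenT : len σ = T.ncard := rfl
  omega

lemma eq_one_of_no_descents (w : Equiv.Perm ℕ) (h0 : w 0 = 0)
    (hw : {i : ℕ | w i ≠ i}.Finite) (hd : descents w = ∅) : w = 1 := by
  have hmono : StrictMono w := by
    apply strictMono_nat_of_lt_succ
    intro n
    match n with
    | 0 =>
      have : w 1 ≠ 0 := by
        intro h
        have := w.injective (h.trans h0.symm)
        omega
      show w 0 < w (0 + 1)
      simp only [Nat.zero_add, h0]
      omega
    | Nat.succ m =>
      have hnd : (m + 1) ∉ descents w := by rw [hd]; exact Set.notMem_empty _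
      simp only [descents, Set.mem_setOf_eq, not_and, not_lt] at hnd
      have hle : w (m + 1) ≤ w (m + 1 + 1) := hnd (by omega)
      have hne : w (m + 1) ≠ w (m + 1 + 1) := fun h => by
        have := w.injective h; omega
      show w (m + 1) < w (m + 1 + 1)
      omega
  by_contra hne
  have hnonempty : {i : ℕ | w i ≠ i}.Nonempty := by
    by_contra h
    rw [Set.not_nonempty_iff_eq_empty] at h
    apply hne
    ext x
    have : x ∉ ({i : ℕ | w i ≠ i}) := h ▸ Set.notMem_empty x
    simpa using this
  obtain ⟨m, hm1, hm2⟩ := Set.Finite.exists_maximal hw hnonempty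
  simp only [id, Set.mem_setOf_eq] at hm1 hm2
  have hmfix : ∀ j, m < j → w j = j := by
    intro j hj
    by_contra h
    have := hm2 h (le_of_lt hj)
    omega
  have hge : m ≤ w m := hmono.le_apply
  have h1 : w (m + 1) = m + 1 := hmfix _ (by omega)
  have h2 : w m < w (m + 1) := hmono (by omega)
  omega

theorem stmt5 (π : Equiv.Perm ℕ) (hπ : FinPerm π) (hne : π ≠ 1)
    (k : ℕ) (hk : 0 < k) (hkd : d2 π ≤ k)
    (σ : Equiv.Perm ℕ) (α β : ℕ) (hα : 0 < α) (hαk : α ≤ k) (hkβ : k < β)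
    (hσ : σ = π * Equiv.swap α β) (hlen : len σ = len π + 1) :
    d1 π ≤ d1 σ := by
  have hαβ : α < β := lt_of_le_of_lt hαk hkβ
  have hπfin := hπ.2
  have hσfin : {i : ℕ | σ i ≠ i}.Finite := by
    apply Set.Finite.subset (hπfin.union (Set.toFinite ({α, β} : Set ℕ)))
    intro x hx
    by_cases hxa : x = α
    · exact Or.inr (by simp [hxa])
    by_cases hxb : x = β
    · exact Or.inr (by simp [hxb])
    · left
      simp only [Set.mem_setOf_eq] at hx ⊢
      rw [hσ] at hx
      rwa [Equiv.Perm.mul_apply, Equiv.swap_apply_of_ne_of_ne hxa hxb] at hx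
  have hσ0 : σ 0 = 0 := by
    rw [hσ, Equiv.Perm.mul_apply,
      Equiv.swap_apply_of_ne_of_ne (by omega) (by omega), hπ.1]
  have hdπ : (descents π).Nonempty := by
    by_contra h
    rw [Set.not_nonempty_iff_eq_empty] at h
    exact hne (eq_one_of_no_descents π hπ.1 hπfin h)
  have hσne : σ ≠ 1 := by
    intro h
    have hz : len σ = 0 := by
      rw [h]
      have he : {p : ℕ × ℕ | p.1 < p.2 ∧ (1 : Equiv.Perm ℕ) p.2 < (1 : Equiv.Perm ℕ) p.1} = ∅ := by
        ext ⟨i, j⟩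
        simp only [Set.mem_setOf_eq, Equiv.Perm.one_apply, Set.mem_empty_iff_false, iff_false]
        omega
      rw [len, he, Set.ncard_empty]
    omega
  have hdσ : (descents σ).Nonempty := by
    by_contra h
    rw [Set.not_nonempty_iff_eq_empty] at h
    exact hσne (eq_one_of_no_descents σ hσ0 hσfin h)
  have hbdd : BddAbove (descents π) := by
    obtain ⟨N, hN⟩ := hπfin.bddAbove
    refine ⟨N + 1, ?_⟩
    rintro i ⟨hi1, hi2⟩
    by_cases h1 : π i = i
    · by_cases h2 : π (i + 1) = i + 1
      · omega
      · have := hN h2; omega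
    · have := hN h1; omega
  have hd12 : d1 π ≤ d2 π := Nat.sInf_le (Nat.sSup_mem hdπ hbdd)
  have hswap : σ * Equiv.swap α β = π := by
    rw [hσ, mul_assoc, Equiv.swap_mul_self, mul_one]
  have hσα : σ α = π β := by rw [hσ, Equiv.Perm.mul_apply, Equiv.swap_apply_left]
  have hσβ : σ β = π α := by rw [hσ, Equiv.Perm.mul_apply, Equiv.swap_apply_right]
  have hvab : π α < π β := by
    rcases lt_trichotomy (π α) (π β) with h | h | h
    · exact h
    · exact absurd (π.injective h) (by omega)
    · exfalso
      have hE' : ∀ p ∈ ({(α, β)} : Finset (ℕ × ℕ)), p.1 < p.2 ∧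
          (σ * Equiv.swap α β) p.2 < (σ * Equiv.swap α β) p.1 := by
        rintro p hp
        simp only [Finset.mem_singleton] at hp
        subst hp
        rw [hswap]
        exact ⟨hαβ, h⟩
      have hEinv' : ∀ p ∈ ({(α, β)} : Finset (ℕ × ℕ)), ¬ σ p.2 < σ p.1 := by
        rintro p hp
        simp only [Finset.mem_singleton] at hp
        subst hp
        simp only
        rw [hσα, hσβ]
        omega
      have hEs' : ∀ p ∈ ({(α, β)} : Finset (ℕ × ℕ)),
          Equiv.swap α β p.2 < Equiv.swap α β p.1 := by
        rintro p hp
        simp only [Finset.mem_singleton] at hp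
        subst hp
        simp only
        rw [Equiv.swap_apply_left, Equiv.swap_apply_right]
        exact hαβ
      have hkey := key_inj σ hσfin α β hαβ (by rw [hσα, hσβ]; exact h)
        {(α, β)} hE' hEinv' hEs'
      rw [hswap] at hkey
      simp only [Finset.card_singleton] at hkey
      omega
  have hnoc : ∀ c, α < c → c < β → ¬ (π α < π c ∧ π c < π β) := by
    rintro c hc1 hc2 ⟨hv1, hv2⟩
    have hcα : c ≠ α := by omega
    have hcβ : c ≠ β := by omega
    have hσc : σ c = π c := by
      rw [hσ, Equiv.Perm.mul_apply, Equiv.swap_apply_of_ne_of_ne hcα hcβ]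
    set E : Finset (ℕ × ℕ) := {(α, β), (α, c), (c, β)} with hEdef
    have hne1 : ((α, β) : ℕ × ℕ) ∉ ({(α, c), (c, β)} : Finset (ℕ × ℕ)) := by
      simp only [Finset.mem_insert, Finset.mem_singleton, Prod.mk.injEq]
      omega
    have hne2 : ((α, c) : ℕ × ℕ) ∉ ({(c, β)} : Finset (ℕ × ℕ)) := by
      simp only [Finset.mem_singleton, Prod.mk.injEq]
      omega
    have hcard : E.card = 3 := by
      rw [hEdef, Finset.card_insert_of_notMem hne1,
        Finset.card_insert_of_notMem hne2, Finset.card_singleton]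
    have hmem : ∀ p ∈ E, p = (α, β) ∨ p = (α, c) ∨ p = (c, β) := by
      intro p hp
      simpa [hEdef] using hp
    have hE' : ∀ p ∈ E, p.1 < p.2 ∧
        (π * Equiv.swap α β) p.2 < (π * Equiv.swap α β) p.1 := by
      intro p hp
      rw [← hσ]
      rcases hmem p hp with rfl | rfl | rfl
      · exact ⟨hαβ, by rw [hσα, hσβ]; omega⟩
      · exact ⟨hc1, by rw [hσα, hσc]; omega⟩
      · exact ⟨hc2, by rw [hσβ, hσc]; omega⟩
    have hEinv' : ∀ p ∈ E, ¬ π p.2 < π p.1 := by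
      intro p hp
      rcases hmem p hp with rfl | rfl | rfl <;> simp only <;> omega
    have hEs' : ∀ p ∈ E, Equiv.swap α β p.2 < Equiv.swap α β p.1 := by
      intro p hp
      rcases hmem p hp with rfl | rfl | rfl <;> simp only
      · rw [Equiv.swap_apply_left, Equiv.swap_apply_right]; exact hαβ
      · rw [Equiv.swap_apply_left, Equiv.swap_apply_of_ne_of_ne hcα hcβ]; exact hc2
      · rw [Equiv.swap_apply_right, Equiv.swap_apply_of_ne_of_ne hcα hcβ]; exact hc1
    have hkey := key_inj π hπfin α β hαβ hvab E hE' hEinv' hEs'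
    rw [← hσ] at hkey
    omega
  have hinc : ∀ j, j < d1 π → π j < π (j + 1) := by
    intro j hj
    rcases Nat.eq_zero_or_pos j with rfl | hj0
    · have h1 : π (0 + 1) ≠ 0 := fun h => by
        have := π.injective (h.trans hπ.1.symm); omega
      have := hπ.1
      omega
    · have hnd : j ∉ descents π := fun h => absurd (Nat.sInf_le h) (by
        show ¬ d1 π ≤ j
        omega)
      simp only [descents, Set.mem_setOf_eq, not_and, not_lt] at hnd
      have h1 := hnd hj0
      have h2 : π j ≠ π (j + 1) := fun h => by have := π.injective h; omega
      omega
  by_contra hcon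
  push_neg at hcon
  have hiσ : d1 σ ∈ descents σ := Nat.sInf_mem hdσ
  set i := d1 σ with hi
  obtain ⟨hi0, hidesc⟩ := hiσ
  have hik : i + 1 ≤ k := by omega
  have hiβ : i ≠ β := by omega
  have hi1β : i + 1 ≠ β := by omega
  by_cases hiα : i = α
  · have e1 : σ i = π β := by
      rw [hσ, Equiv.Perm.mul_apply, hiα, Equiv.swap_apply_left]
    have hi1α : i + 1 ≠ α := by omega
    have e2 : σ (i + 1) = π (i + 1) := by
      rw [hσ, Equiv.Perm.mul_apply, Equiv.swap_apply_of_ne_of_ne hi1α hi1β]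
    rw [e1, e2] at hidesc
    apply hnoc (i + 1) (by omega) (by omega)
    constructor
    · have h3 : π i < π (i + 1) := hinc i hcon
      rw [hiα] at h3
      rw [← hiα]
      exact hinc i hcon
    · exact hidesc
  · by_cases hi1α : i + 1 = α
    · have e1 : σ i = π i := by
        rw [hσ, Equiv.Perm.mul_apply, Equiv.swap_apply_of_ne_of_ne hiα hiβ]
      have e2 : σ (i + 1) = π β := by
        rw [hσ, Equiv.Perm.mul_apply, hi1α, Equiv.swap_apply_left]
      rw [e1, e2] at hidesc
      have hd : i ∈ descents π := by
        refine ⟨hi0, ?_⟩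
        rw [hi1α]
        exact lt_trans hvab hidesc
      have := Nat.sInf_le hd
      show False
      have : d1 π ≤ i := this
      omega
    · have e1 : σ i = π i := by
        rw [hσ, Equiv.Perm.mul_apply, Equiv.swap_apply_of_ne_of_ne hiα hiβ]
      have e2 : σ (i + 1) = π (i + 1) := by
        rw [hσ, Equiv.Perm.mul_apply, Equiv.swap_apply_of_ne_of_ne hi1α hi1β]
      rw [e1, e2] at hidesc
      have hd : i ∈ descents π := ⟨hi0, hidesc⟩
      have h4 : d1 π ≤ i := Nat.sInf_le hd
      omega
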